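/- Every group grading on the superalgebra B(4,2) compatible with the main ℤ₂-grading is a coarsening of the ℤ-grading with components B(4,2)⁰ = Fe₁ ⊕ Fe₂, B(4,2)¹ = Fu, B(4,2)⁻¹ = Fv, B(4,2)² = Fx, B(4,2)⁻² = Fy, for a suitable symplectic basis {u,v} of V, where under the identification End_F(V) ≅ M₂(F), e₁ = E₁₁, e₂ = E₂₂, x = E₁₂, y = E₂₁. -/

import Mathlib

/-- every group grading on `B(4,2)` compatible with the main `ℤ₂`-grading
is a coarsening of the 5-component `ℤ`-grading
`span{e₁',e₂'} ⊕ Fu' ⊕ Fv' ⊕ Fx' ⊕ Fy'` associated to a suitable symplectic basis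
`{u',v'}` of `V` (where `e₁' = v'·u'`, `e₂' = −u'·v'`, `x' = −u'·u'`, `y' = v'·v'`).
`B(4,2)` is presented by its multiplication table with respect to the matrix units
`e₁,e₂,x,y` of `End_F(V)` and a symplectic basis `{u,v}` of `V`. -/
theorem B42_grading_coarsening_of_Z_grading {F S G : Type*} [Field F] [AddCommGroup S]
    [Module F S] [Group G] [DecidableEq G]
    (hchar : ringChar F = 3)
    (mul : S →ₗ[F] S →ₗ[F] S) (e₁ e₂ x y u v : S)
    (hbasis : LinearIndependent F ![e₁, e₂, x, y, u, v])
    (hspan : Submodule.span F {e₁, e₂, x, y, u, v} = ⊤)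
    (h_ee : mul e₁ e₁ = e₁ ∧ mul e₁ e₂ = 0 ∧ mul e₁ x = x ∧ mul e₁ y = 0 ∧
      mul e₂ e₁ = 0 ∧ mul e₂ e₂ = e₂ ∧ mul e₂ x = 0 ∧ mul e₂ y = y ∧
      mul x e₁ = 0 ∧ mul x e₂ = x ∧ mul x x = 0 ∧ mul x y = e₁ ∧
      mul y e₁ = y ∧ mul y e₂ = 0 ∧ mul y x = e₂ ∧ mul y y = 0)
    (h_eo : mul e₁ u = 0 ∧ mul e₁ v = v ∧ mul e₂ u = u ∧ mul e₂ v = 0 ∧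
      mul x u = 0 ∧ mul x v = -u ∧ mul y u = -v ∧ mul y v = 0)
    (h_oe : mul u e₁ = u ∧ mul u e₂ = 0 ∧ mul u x = 0 ∧ mul u y = v ∧
      mul v e₁ = 0 ∧ mul v e₂ = v ∧ mul v x = u ∧ mul v y = 0)
    (h_oo : mul u u = -x ∧ mul u v = -e₂ ∧ mul v u = e₁ ∧ mul v v = y)
    (γ : G → Submodule F S) (hint : DirectSum.IsInternal γ)
    (hgrmul : ∀ g h : G, ∀ a ∈ γ g, ∀ c ∈ γ h, mul a c ∈ γ (g * h))
    (hsuper : ∀ g : G, γ g =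
      (γ g ⊓ Submodule.span F {e₁, e₂, x, y}) ⊔ (γ g ⊓ Submodule.span F {u, v})) :
    ∃ u' ∈ Submodule.span F ({u, v} : Set S), ∃ v' ∈ Submodule.span F ({u, v} : Set S),
      Submodule.span F {u', v'} = Submodule.span F ({u, v} : Set S) ∧
      mul u' (mul v' u') = u' ∧
      (∃ g : G, Submodule.span F {mul v' u', mul u' v'} ≤ γ g) ∧
      (∃ g : G, Submodule.span F {u'} ≤ γ g) ∧
      (∃ g : G, Submodule.span F {v'} ≤ γ g) ∧
      (∃ g : G, Submodule.span F {mul u' u'} ≤ γ g) ∧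
      (∃ g : G, Submodule.span F {mul v' v'} ≤ γ g) := by
  obtain ⟨hee11, hee12, he1x, he1y, he2e1, hee22, he2x, he2y,
    hxe1, hxe2, hxx, hxy, hye1, hye2, hyx, hyy⟩ := h_ee
  obtain ⟨he1u, he1v, he2u, he2v, hxu, hxv, hyu, hyv⟩ := h_eo
  obtain ⟨hue1, hue2, hux, huy, hve1, hve2, hvx, hvy⟩ := h_oe
  obtain ⟨huu, huv, hvu, hvv⟩ := h_oo
  set V : Submodule F S := Submodule.span F {u, v} with hVdef
  set E : Submodule F S := Submodule.span F {e₁, e₂, x, y} with hEdef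
  -- linear independence in coordinates
  have hli : ∀ c₁ c₂ c₃ c₄ c₅ c₆ : F,
      c₁ • e₁ + c₂ • e₂ + c₃ • x + c₄ • y + c₅ • u + c₆ • v = 0 →
      c₁ = 0 ∧ c₂ = 0 ∧ c₃ = 0 ∧ c₄ = 0 ∧ c₅ = 0 ∧ c₆ = 0 := by
    intro c₁ c₂ c₃ c₄ c₅ c₆ h
    have h2 := Fintype.linearIndependent_iff.mp hbasis ![c₁, c₂, c₃, c₄, c₅, c₆] ?_
    · exact ⟨h2 0, h2 1, h2 2, h2 3, h2 4, h2 5⟩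
    · simpa [Fin.sum_univ_six] using h
  have humem : u ∈ V := Submodule.subset_span (by simp)
  have hvmem : v ∈ V := Submodule.subset_span (by simp)
  have hune : u ≠ 0 := by
    intro h
    exact one_ne_zero ((hli 0 0 0 0 1 0 (by simp [h])).2.2.2.2.1)
  -- membership characterizations
  have hmemV : ∀ w ∈ V, ∃ p q : F, p • u + q • v = w := fun w hw =>
    Submodule.mem_span_pair.mp hw
  have hmemE : ∀ w ∈ E, ∃ p q r s : F, w = p • e₁ + q • e₂ + r • x + s • y := by
    intro w hw
    rw [hEdef, Submodule.mem_span_insert] at hw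
    obtain ⟨p, z, hz, rfl⟩ := hw
    rw [Submodule.mem_span_insert] at hz
    obtain ⟨q, z₂, hz₂, rfl⟩ := hz
    obtain ⟨r, s, rfl⟩ := Submodule.mem_span_pair.mp hz₂
    exact ⟨p, q, r, s, by abel⟩
  -- E and V intersect trivially
  have hEV : V ⊓ E = ⊥ := by
    rw [eq_bot_iff]
    intro w hw
    obtain ⟨p, q, r, s, hw1⟩ := hmemE w hw.2
    obtain ⟨a, b, hw2⟩ := hmemV w hw.1
    have h0 : p • e₁ + q • e₂ + r • x + s • y + (-a) • u + (-b) • v = 0 := by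
      rw [neg_smul, neg_smul, ← hw1]
      rw [← hw2]
      abel
    obtain ⟨h1, h2, h3, h4, -, -⟩ := hli _ _ _ _ _ _ h0
    simp [Submodule.mem_bot, hw1, h1, h2, h3, h4]
  -- the odd part is the sup of its homogeneous pieces
  have htop : (⊤ : Submodule F S) ≤ E ⊔ ⨆ g, (γ g ⊓ V) := by
    rw [← hint.submodule_iSup_eq_top]
    refine iSup_le fun g => ?_
    calc γ g = (γ g ⊓ E) ⊔ (γ g ⊓ V) := hsuper g
    _ ≤ E ⊔ ⨆ g, (γ g ⊓ V) := sup_le_sup inf_le_right (le_iSup (fun g => γ g ⊓ V) g)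
  have hW : V ≤ ⨆ g, (γ g ⊓ V) := by
    have hWV : (⨆ g, (γ g ⊓ V)) ≤ V := iSup_le fun g => inf_le_right
    have h2 : V ⊓ (E ⊔ ⨆ g, (γ g ⊓ V)) = ⨆ g, (γ g ⊓ V) := by
      rw [← inf_sup_assoc_of_le E hWV, hEV, bot_sup_eq]
    calc V ≤ V ⊓ (E ⊔ ⨆ g, (γ g ⊓ V)) := le_inf le_rfl (le_trans le_top htop)
    _ = ⨆ g, (γ g ⊓ V) := h2
  -- two distinct homogeneous components in the same γ g coincide
  have hcomp : ∀ (g h : G) (z : S), z ≠ 0 → z ∈ γ g → z ∈ γ h → g = h := by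
    intro g h z hz hg hh
    by_contra hne
    exact hz (Submodule.disjoint_def.mp
      (hint.submodule_iSupIndep.pairwiseDisjoint hne) z hg hh)
  -- there is a component meeting V nontrivially
  have hex : ∃ g₀ : G, γ g₀ ⊓ V ≠ ⊥ := by
    by_contra h
    push_neg at h
    have : (⨆ g, (γ g ⊓ V)) = ⊥ := by
      simp only [iSup_eq_bot]; exact h
    rw [this, le_bot_iff] at hW
    exact hune (by simpa [hW] using humem)
  obtain ⟨g₁, hg₁⟩ := hex
  by_cases hP : ∃ g₂ : G, g₂ ≠ g₁ ∧ γ g₂ ⊓ V ≠ ⊥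
  · -- Case B: two distinct components meet V
    obtain ⟨g₂, hg₂ne, hg₂⟩ := hP
    obtain ⟨w₁, hw₁mem, hw₁ne⟩ := Submodule.exists_mem_ne_zero_of_ne_bot hg₁
    obtain ⟨w₂, hw₂mem, hw₂ne⟩ := Submodule.exists_mem_ne_zero_of_ne_bot hg₂
    obtain ⟨a, b, hw₁⟩ := hmemV w₁ hw₁mem.2
    obtain ⟨c, d, hw₂⟩ := hmemV w₂ hw₂mem.2
    have hdisj : ∀ z : S, z ∈ γ g₁ → z ∈ γ g₂ → z = 0 := fun z h1 h2 =>
      Submodule.disjoint_def.mp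
        (hint.submodule_iSupIndep.pairwiseDisjoint (Ne.symm hg₂ne)) z h1 h2
    -- pairs of vectors in V: zero iff coefficients vanish
    have hpair0 : ∀ p q : F, p • u + q • v = 0 → p = 0 ∧ q = 0 := by
      intro p q h
      have h0 : (0:F) • e₁ + (0:F) • e₂ + (0:F) • x + (0:F) • y + p • u + q • v = 0 := by
        simpa using h
      obtain ⟨-, -, -, -, h5, h6⟩ := hli _ _ _ _ _ _ h0
      exact ⟨h5, h6⟩
    -- determinant is nonzero
    have hD : a * d - b * c ≠ 0 := by
      intro hdet
      have hz1 : d • w₁ = b • w₂ := by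
        have e : d • w₁ - b • w₂ = (d * a - b * c) • u + (d * b - b * d) • v := by
          rw [← hw₁, ← hw₂]; module
        have h1 : d * a - b * c = 0 := by linear_combination hdet
        have h2 : d * b - b * d = 0 := by ring
        rw [h1, h2, zero_smul, zero_smul, add_zero, sub_eq_zero] at e
        exact e
      have hz2 : c • w₁ = a • w₂ := by
        have e : c • w₁ - a • w₂ = (c * a - a * c) • u + (c * b - a * d) • v := by
          rw [← hw₁, ← hw₂]; module
        have h1 : c * a - a * c = 0 := by ring
        have h2 : c * b - a * d = 0 := by linear_combination -hdet
        rw [h1, h2, zero_smul, zero_smul, add_zero, sub_eq_zero] at e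
        exact e
      have hd0 : d = 0 := by
        have h0 : d • w₁ = 0 := hdisj _ (Submodule.smul_mem _ d hw₁mem.1)
          (hz1 ▸ Submodule.smul_mem _ b hw₂mem.1)
        rcases smul_eq_zero.mp h0 with h | h
        · exact h
        · exact absurd h hw₁ne
      have hc0 : c = 0 := by
        have h0 : c • w₁ = 0 := hdisj _ (Submodule.smul_mem _ c hw₁mem.1)
          (hz2 ▸ Submodule.smul_mem _ a hw₂mem.1)
        rcases smul_eq_zero.mp h0 with h | h
        · exact h
        · exact absurd h hw₁ne
      exact hw₂ne (by rw [← hw₂, hc0, hd0]; simp)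
    -- normalize the second basis vector
    set D : F := a * d - b * c with hDdef
    set c' : F := D⁻¹ * c with hc'def
    set d' : F := D⁻¹ * d with hd'def
    set v' : S := D⁻¹ • w₂ with hv'def
    have hv' : c' • u + d' • v = v' := by
      rw [hv'def, ← hw₂, hc'def, hd'def]; module
    have hdet' : a * d' - b * c' = 1 := by
      rw [hc'def, hd'def]
      have h : a * (D⁻¹ * d) - b * (D⁻¹ * c) = D⁻¹ * (a * d - b * c) := by ring
      rw [h, ← hDdef, inv_mul_cancel₀ hD]
    have hv'mem : v' ∈ γ g₂ := Submodule.smul_mem _ _ hw₂mem.1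
    have hv'V : v' ∈ V := Submodule.smul_mem _ _ hw₂mem.2
    have hv'ne : v' ≠ 0 := smul_ne_zero (inv_ne_zero hD) hw₂ne
    -- generic multiplication formulas
    have hmul_oo : ∀ α β g h : F, mul (α • u + β • v) (g • u + h • v) =
        (β * g) • e₁ + (-(α * h)) • e₂ + (-(α * g)) • x + (β * h) • y := by
      intro α β g h
      simp only [map_add, map_smul, LinearMap.add_apply, LinearMap.smul_apply,
        huu, huv, hvu, hvv]
      module
    have hmul_oe : ∀ α β p q r s : F, mul (α • u + β • v)
        (p • e₁ + q • e₂ + r • x + s • y) = (α * p + β * r) • u + (α * s + β * q) • v := by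
      intro α β p q r s
      simp only [map_add, map_smul, LinearMap.add_apply, LinearMap.smul_apply,
        hue1, hue2, hux, huy, hve1, hve2, hvx, hvy]
      module
    have hp : mul v' w₁ = (d' * a) • e₁ + (-(c' * b)) • e₂ + (-(c' * a)) • x +
        (d' * b) • y := by rw [← hv', ← hw₁, hmul_oo]
    have hq : mul w₁ v' = (b * c') • e₁ + (-(a * d')) • e₂ + (-(a * c')) • x +
        (b * d') • y := by rw [← hv', ← hw₁, hmul_oo]
    have hup : mul w₁ (mul v' w₁) = w₁ := by
      rw [hp]
      nth_rewrite 1 [← hw₁]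
      rw [hmul_oe]
      have h1 : a * (d' * a) + b * (-(c' * a)) = a := by linear_combination a * hdet'
      have h2 : a * (d' * b) + b * (-(c' * b)) = b := by linear_combination b * hdet'
      rw [h1, h2, hw₁]
    have hvq : mul v' (mul w₁ v') = -v' := by
      rw [hq]
      nth_rewrite 1 [← hv']
      rw [hmul_oe]
      have h1 : c' * (b * c') + d' * (-(a * c')) = -c' := by linear_combination (-c') * hdet'
      have h2 : c' * (b * d') + d' * (-(a * d')) = -d' := by linear_combination (-d') * hdet'
      rw [h1, h2, ← hv']
      module
    -- group relations
    have hpmem : mul v' w₁ ∈ γ (g₂ * g₁) := hgrmul _ _ _ hv'mem _ hw₁mem.1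
    have hqmem : mul w₁ v' ∈ γ (g₁ * g₂) := hgrmul _ _ _ hw₁mem.1 _ hv'mem
    have hrel1 : g₂ * g₁ = 1 := by
      have h1 : mul w₁ (mul v' w₁) ∈ γ (g₁ * (g₂ * g₁)) := hgrmul _ _ _ hw₁mem.1 _ hpmem
      rw [hup] at h1
      have := hcomp _ _ _ hw₁ne h1 hw₁mem.1
      have h2 : g₁ * (g₂ * g₁) = g₁ * 1 := by rw [mul_one]; exact this
      exact mul_left_cancel h2
    have hrel2 : g₁ * g₂ = 1 := by
      have h1 : mul v' (mul w₁ v') ∈ γ (g₂ * (g₁ * g₂)) := hgrmul _ _ _ hv'mem _ hqmem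
      rw [hvq] at h1
      have h1' : v' ∈ γ (g₂ * (g₁ * g₂)) := by
        have := Submodule.neg_mem _ h1
        simpa using this
      have := hcomp _ _ _ hv'ne h1' hv'mem
      have h2 : g₂ * (g₁ * g₂) = g₂ * 1 := by rw [mul_one]; exact this
      exact mul_left_cancel h2
    -- spans coincide
    have hspan' : Submodule.span F {w₁, v'} = V := by
      apply le_antisymm
      · rw [Submodule.span_le]
        rintro z (rfl | rfl)
        · exact hw₁mem.2
        · exact hv'V
      · rw [hVdef, Submodule.span_le]
        have hu' : d' • w₁ + (-b) • v' = u := by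
          have e : d' • w₁ + (-b) • v' = (d' * a - b * c') • u + (0:F) • v := by
            rw [← hw₁, ← hv']; module
          have h1 : d' * a - b * c' = 1 := by linear_combination hdet'
          rw [e, h1, one_smul, zero_smul, add_zero]
        have hv'' : (-c') • w₁ + a • v' = v := by
          have e : (-c') • w₁ + a • v' = (0:F) • u + (a * d' - c' * b) • v := by
            rw [← hw₁, ← hv']; module
          have h1 : a * d' - c' * b = 1 := by linear_combination hdet'
          rw [e, h1, one_smul, zero_smul, zero_add]
        rintro z (rfl | rfl)
        · exact Submodule.mem_span_pair.mpr ⟨d', -b, hu'⟩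
        · exact Submodule.mem_span_pair.mpr ⟨-c', a, hv''⟩
    refine ⟨w₁, hw₁mem.2, v', hv'V, hspan', hup, ?_, ?_, ?_, ?_, ?_⟩
    · refine ⟨1, Submodule.span_le.mpr ?_⟩
      rintro z (rfl | rfl)
      · rw [← hrel1]; exact hpmem
      · rw [← hrel2]; exact hqmem
    · exact ⟨g₁, Submodule.span_le.mpr (by rintro z (rfl | rfl); exact hw₁mem.1)⟩
    · exact ⟨g₂, Submodule.span_le.mpr (by rintro z (rfl | rfl); exact hv'mem)⟩
    · exact ⟨g₁ * g₁, Submodule.span_le.mpr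
        (by rintro z (rfl | rfl); exact hgrmul _ _ _ hw₁mem.1 _ hw₁mem.1)⟩
    · exact ⟨g₂ * g₂, Submodule.span_le.mpr
        (by rintro z (rfl | rfl); exact hgrmul _ _ _ hv'mem _ hv'mem)⟩
  · -- Case A: V is contained in a single component
    push_neg at hP
    have hVle : V ≤ γ g₁ := by
      refine le_trans hW (iSup_le fun g => ?_)
      by_cases hg : g = g₁
      · subst hg; exact inf_le_left
      · rw [hP g hg]; exact bot_le
    have hu : u ∈ γ g₁ := hVle humem
    have hv : v ∈ γ g₁ := hVle hvmem
    refine ⟨u, humem, v, hvmem, rfl, by rw [hvu, hue1], ?_, ?_, ?_, ?_, ?_⟩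
    · exact ⟨g₁ * g₁, Submodule.span_le.mpr (by
        rintro z (rfl | rfl)
        · exact hgrmul _ _ _ hv _ hu
        · exact hgrmul _ _ _ hu _ hv)⟩
    · exact ⟨g₁, Submodule.span_le.mpr (by rintro z (rfl | rfl); exact hu)⟩
    · exact ⟨g₁, Submodule.span_le.mpr (by rintro z (rfl | rfl); exact hv)⟩
    · exact ⟨g₁ * g₁, Submodule.span_le.mpr
        (by rintro z (rfl | rfl); exact hgrmul _ _ _ hu _ hu)⟩
    · exact ⟨g₁ * g₁, Submodule.span_le.mpr
        (by rintro z (rfl | rfl); exact hgrmul _ _ _ hv _ hv)⟩
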